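/- Every binary structure of bounded degree is ptp-conservative: for each m there exist n and a coloring C̄ such that the positive m-types over the base signature of all elements are preserved by the quotient map q_n : C̄ → M_n(C̄). -/

import Mathlib

namespace BDDFC

/-- A (binary) relational signature: binary relation symbols, unary relation
symbols (used also for colors), and constants. -/
structure Sig where
  Rel : Type
  Un : Type
  Const : Type

/-- A relational structure over a signature. -/
structure Str (σ : Sig) where
  Dom : Type
  rel : σ.Rel → Dom → Dom → Prop
  un : σ.Un → Dom → Prop
  const : σ.Const → Dom

/-- Terms of a conjunctive query `Ψ(x̄, y)` with `k` existential variables: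
an existential variable, the distinguished free variable `y`, or a constant. -/
inductive Tm (σ : Sig) (k : ℕ) where
  | var : Fin k → Tm σ k
  | y : Tm σ k
  | const : σ.Const → Tm σ k

/-- Atoms of conjunctive queries: binary relation atoms, unary atoms,
and equalities (in particular equalities with constants). -/
inductive Atom (σ : Sig) (k : ℕ) where
  | rel : σ.Rel → Tm σ k → Tm σ k → Atom σ k
  | un : σ.Un → Tm σ k → Atom σ k
  | eq : Tm σ k → Tm σ k → Atom σ k

/-- A conjunctive query `Ψ(x̄, y)` with `|x̄| = k`, as a finite conjunction of atoms. -/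
abbrev CQ (σ : Sig) (k : ℕ) := List (Atom σ k)

variable {σ : Sig}

def tmVal (A : Str σ) {k : ℕ} (v : Fin k → A.Dom) (e : A.Dom) : Tm σ k → A.Dom
  | .var i => v i
  | .y => e
  | .const c => A.const c

def satAtom (A : Str σ) {k : ℕ} (v : Fin k → A.Dom) (e : A.Dom) : Atom σ k → Prop
  | .rel R s t => A.rel R (tmVal A v e s) (tmVal A v e t)
  | .un U s => A.un U (tmVal A v e s)
  | .eq s t => tmVal A v e s = tmVal A v e t

/-- `A ⊨ Ψ(v(x̄), e)`. -/
def sat (A : Str σ) {k : ℕ} (v : Fin k → A.Dom) (e : A.Dom) (q : CQ σ k) : Prop :=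
  ∀ a ∈ q, satAtom A v e a

/-- `Ψ(x̄,y) ∈ ptp_n(A, e, σ)` : a query with `|x̄| < n` satisfied at `e`. -/
def inPtp (A : Str σ) (n : ℕ) (e : A.Dom) {k : ℕ} (q : CQ σ k) : Prop :=
  k < n ∧ ∃ v, sat A v e q

/-- The positive `n`-type of `e` in `A`, as a set of conjunctive queries. -/
def ptypeSet (A : Str σ) (n : ℕ) (e : A.Dom) : Set (Σ k : ℕ, CQ σ k) :=
  {p | p.1 < n ∧ ∃ v, sat A v e p.2}

/-- `d ≡_n e` : equality of positive `n`-types. -/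
def equivPtp (A : Str σ) (n : ℕ) (d e : A.Dom) : Prop :=
  ∀ k, k < n → ∀ q : CQ σ k, (∃ v, sat A v d q) ↔ (∃ v, sat A v e q)

def ptpSetoid (A : Str σ) (n : ℕ) : Setoid A.Dom where
  r := equivPtp A n
  iseqv := ⟨fun _ _ _ _ => Iff.rfl, fun h k hk q => (h k hk q).symm,
            fun h h' k hk q => (h k hk q).trans (h' k hk q)⟩

/-- The quotient structure `M_n(A)`, with relations the projections of the
relations of `A` (the minimal ones making the quotient map a homomorphism). -/
def Mq (A : Str σ) (n : ℕ) : Str σ where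
  Dom := Quotient (ptpSetoid A n)
  rel R x y := ∃ a b, Quotient.mk (ptpSetoid A n) a = x ∧
    Quotient.mk (ptpSetoid A n) b = y ∧ A.rel R a b
  un U x := ∃ a, Quotient.mk (ptpSetoid A n) a = x ∧ A.un U a
  const c := Quotient.mk (ptpSetoid A n) (A.const c)

/-- The quotient map `q_n : A → M_n(A)`. -/
def qmap (A : Str σ) (n : ℕ) (a : A.Dom) : (Mq A n).Dom :=
  Quotient.mk (ptpSetoid A n) a

def IsHom (A B : Str σ) (f : A.Dom → B.Dom) : Prop :=
  (∀ R a b, A.rel R a b → B.rel R (f a) (f b)) ∧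
  (∀ U a, A.un U a → B.un U (f a)) ∧
  (∀ c, f (A.const c) = B.const c)

/-- An element is non-constant if it is not the interpretation of a constant. -/
def NonConst (A : Str σ) (a : A.Dom) : Prop := ∀ c, A.const c ≠ a

/-- The signature extended by a set `K` of colors (fresh unary predicates). -/
def colorSig (σ : Sig) (K : Type) : Sig := ⟨σ.Rel, σ.Un ⊕ K, σ.Const⟩

/-- The coloring of `C` determined by a color assignment `col`; each element
satisfies exactly one color. -/
def colored (C : Str σ) {K : Type} (col : C.Dom → K) : Str (colorSig σ K) where
  Dom := C.Dom
  rel := C.rel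
  un := fun u a => match u with
    | Sum.inl u' => C.un u' a
    | Sum.inr kk => col a = kk
  const := C.const

/-- The reduct of a colored structure back to the base signature. -/
def reduct {K : Type} (A : Str (colorSig σ K)) : Str σ where
  Dom := A.Dom
  rel := A.rel
  un := fun u a => A.un (Sum.inl u) a
  const := A.const

/-- The coloring `col` of `C` is `n`-conservative up to size `m`: positive
`m`-types over the base signature are preserved by the quotient map `q_n`. -/
def conservative (C : Str σ) {K : Type} (col : C.Dom → K) (n m : ℕ) : Prop :=
  ∀ e : C.Dom, ∀ k, k < m → ∀ q : CQ σ k,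
    (∃ v, sat C v e q) ↔
    (∃ v, sat (reduct (Mq (colored C col) n)) v (qmap (colored C col) n e) q)

/-- One step of the edge relation of a binary structure. -/
def edge (A : Str σ) (a b : A.Dom) : Prop := ∃ R, A.rel R a b

/-- Directed paths of a given length. -/
def chain (A : Str σ) : ℕ → A.Dom → A.Dom → Prop
  | 0, a, b => a = b
  | ℓ + 1, a, b => ∃ c, edge A a c ∧ chain A ℓ c b



variable {σ : Sig}

/-! ### Gaifman graph utilities -/

/-- Symmetric one-step adjacency. -/
def nstep (C : Str σ) (a b : C.Dom) : Prop := (∃ R, C.rel R a b) ∨ (∃ R, C.rel R b a)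

theorem nstep_symm {C : Str σ} {a b : C.Dom} (h : nstep C a b) : nstep C b a := h.symm

/-- Undirected reachability in at most `p` steps. -/
def near (C : Str σ) : ℕ → C.Dom → C.Dom → Prop
  | 0, a, b => a = b
  | p + 1, a, b => near C p a b ∨ ∃ c, near C p a c ∧ nstep C c b

theorem near_refl (C : Str σ) (p : ℕ) (a : C.Dom) : near C p a a := by
  induction p with
  | zero => rfl
  | succ p ih => exact Or.inl ih

theorem near_succ {C : Str σ} {p : ℕ} {a b : C.Dom} (h : near C p a b) :
    near C (p + 1) a b := Or.inl h

theorem near_mono {C : Str σ} {p q : ℕ} (hpq : p ≤ q) {a b : C.Dom}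
    (h : near C p a b) : near C q a b := by
  induction q with
  | zero => exact (Nat.le_zero.mp hpq) ▸ h
  | succ q ih =>
    rcases Nat.lt_or_ge p (q+1) with h1 | h1
    · exact near_succ (ih (Nat.lt_succ_iff.mp h1))
    · exact (Nat.le_antisymm hpq h1) ▸ h

theorem near_trans {C : Str σ} {p q : ℕ} {a b c : C.Dom}
    (h1 : near C p a b) (h2 : near C q b c) : near C (p + q) a c := by
  induction q generalizing c with
  | zero => exact h2 ▸ h1
  | succ q ih =>
    rcases h2 with h2 | ⟨x, hx, hs⟩
    · exact near_succ (ih h2)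
    · exact Or.inr ⟨x, ih hx, hs⟩

theorem near_single {C : Str σ} {a b : C.Dom} (h : nstep C a b) : near C 1 a b :=
  Or.inr ⟨a, rfl, h⟩

theorem near_symm {C : Str σ} {p : ℕ} {a b : C.Dom} (h : near C p a b) :
    near C p b a := by
  induction p generalizing b with
  | zero => exact h.symm
  | succ p ih =>
    rcases h with h | ⟨c, hc, hs⟩
    · exact near_succ (ih h)
    · have := near_trans (near_single (nstep_symm hs)) (ih hc)
      rwa [Nat.add_comm] at this

/-! ### Ball bounds -/

theorem nbhd_bound (C : Str σ) (d : ℕ)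
    (hdeg : ∀ a : C.Dom,
      ({p : σ.Rel × C.Dom × C.Dom |
          C.rel p.1 p.2.1 p.2.2 ∧ (p.2.1 = a ∨ p.2.2 = a)}).Finite ∧
      ({p : σ.Rel × C.Dom × C.Dom |
          C.rel p.1 p.2.1 p.2.2 ∧ (p.2.1 = a ∨ p.2.2 = a)}).ncard ≤ d)
    (c : C.Dom) :
    ({b | nstep C c b}).Finite ∧ ({b | nstep C c b}).ncard ≤ d := by
  classical
  rcases Set.eq_empty_or_nonempty {b | nstep C c b} with he | ⟨b0, hb0⟩
  · rw [he]; simp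
  · set t : Set (σ.Rel × C.Dom × C.Dom) :=
      {p | C.rel p.1 p.2.1 p.2.2 ∧ (p.2.1 = c ∨ p.2.2 = c)} with ht
    obtain ⟨htfin, htcard⟩ := hdeg c
    have hR0 : Nonempty σ.Rel := by
      rcases hb0 with ⟨R, _⟩ | ⟨R, _⟩ <;> exact ⟨R⟩
    obtain ⟨R0⟩ := hR0
    set f : C.Dom → σ.Rel × C.Dom × C.Dom :=
      fun b => if h : ∃ R, C.rel R c b then (h.choose, c, b)
        else if h2 : ∃ R, C.rel R b c then (h2.choose, b, c) else (R0, b, b) with hf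
    have hmaps : ∀ b ∈ {b | nstep C c b}, f b ∈ t := by
      intro b hb
      by_cases h : ∃ R, C.rel R c b
      · simp only [hf, dif_pos h]
        exact ⟨h.choose_spec, Or.inl rfl⟩
      · have h2 : ∃ R, C.rel R b c := by
          rcases hb with hb | hb
          · exact absurd hb h
          · exact hb
        simp only [hf, dif_neg h, dif_pos h2]
        exact ⟨h2.choose_spec, Or.inr rfl⟩
    have hinj : Set.InjOn f {b | nstep C c b} := by
      intro a ha b hb hab
      by_cases h1 : ∃ R, C.rel R c a <;> by_cases h2 : ∃ R, C.rel R c b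
      · simp only [hf, dif_pos h1, dif_pos h2, Prod.mk.injEq] at hab
        exact hab.2.2
      · have h2' : ∃ R, C.rel R b c := by
          rcases hb with hb | hb
          · exact absurd hb h2
          · exact hb
        simp only [hf, dif_pos h1, dif_neg h2, dif_pos h2', Prod.mk.injEq] at hab
        -- (R, c, a) = (R', b, c) : c = b, a = c
        rw [hab.2.2, ← hab.2.1]
      · have h1' : ∃ R, C.rel R a c := by
          rcases ha with ha | ha
          · exact absurd ha h1
          · exact ha
        simp only [hf, dif_neg h1, dif_pos h1', dif_pos h2, Prod.mk.injEq] at hab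
        rw [← hab.2.2, hab.2.1]
      · have h1' : ∃ R, C.rel R a c := by
          rcases ha with ha | ha
          · exact absurd ha h1
          · exact ha
        have h2' : ∃ R, C.rel R b c := by
          rcases hb with hb | hb
          · exact absurd hb h2
          · exact hb
        simp only [hf, dif_neg h1, dif_pos h1', dif_neg h2, dif_pos h2', Prod.mk.injEq] at hab
        exact hab.2.1
    constructor
    · exact Set.Finite.of_finite_image (htfin.subset (Set.image_subset_iff.mpr hmaps))
        hinj
    · exact le_trans (Set.ncard_le_ncard_of_injOn f hmaps hinj htfin) htcard

theorem ball_bound (C : Str σ) (d : ℕ)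
    (hdeg : ∀ a : C.Dom,
      ({p : σ.Rel × C.Dom × C.Dom |
          C.rel p.1 p.2.1 p.2.2 ∧ (p.2.1 = a ∨ p.2.2 = a)}).Finite ∧
      ({p : σ.Rel × C.Dom × C.Dom |
          C.rel p.1 p.2.1 p.2.2 ∧ (p.2.1 = a ∨ p.2.2 = a)}).ncard ≤ d)
    (p : ℕ) (a : C.Dom) :
    ({b | near C p a b}).Finite ∧ ({b | near C p a b}).ncard ≤ (d+1)^p := by
  classical
  induction p with
  | zero =>
    have : {b | near C 0 a b} = {a} := by
      ext b; simp only [Set.mem_setOf_eq, Set.mem_singleton_iff]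
      exact ⟨fun h => h.symm, fun h => h.symm⟩
    rw [this]; simp
  | succ p ih =>
    obtain ⟨hfin, hcard⟩ := ih
    set I := hfin.toFinset with hI
    have hins : ∀ c : C.Dom, (insert c {b | nstep C c b}).Finite ∧
        (insert c {b | nstep C c b}).ncard ≤ d + 1 := by
      intro c
      obtain ⟨h1, h2⟩ := nbhd_bound C d hdeg c
      exact ⟨h1.insert c, le_trans (Set.ncard_insert_le _ _) (by omega)⟩
    set T := I.biUnion (fun c => (hins c).1.toFinset) with hT
    have hsub : {b | near C (p+1) a b} ⊆ ↑T := by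
      intro b hb
      rcases hb with hb | ⟨c, hc, hs⟩
      · simp only [hT, Finset.coe_biUnion, Set.mem_iUnion]
        refine ⟨b, ?_, ?_⟩
        · simp [hI, hb]
        · simp [Set.Finite.mem_toFinset]
      · simp only [hT, Finset.coe_biUnion, Set.mem_iUnion]
        refine ⟨c, ?_, ?_⟩
        · simp [hI, hc]
        · simp [Set.Finite.mem_toFinset, hs]
    constructor
    · exact Set.Finite.subset (T.finite_toSet) hsub
    · calc ({b | near C (p+1) a b}).ncard ≤ (↑T : Set C.Dom).ncard :=
            Set.ncard_le_ncard hsub T.finite_toSet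
        _ = T.card := by rw [Set.ncard_coe_finset]
        _ ≤ ∑ c ∈ I, ((hins c).1.toFinset).card := Finset.card_biUnion_le
        _ ≤ I.card * (d + 1) := by
            refine Finset.sum_le_card_nsmul _ _ _ ?_
            intro c _
            have := (hins c).2
            rwa [Set.ncard_eq_toFinset_card _ (hins c).1] at this
        _ ≤ (d+1)^p * (d+1) := by
            have : I.card ≤ (d+1)^p := by
              rw [hI, ← Set.ncard_eq_toFinset_card _ hfin]; exact hcard
            exact Nat.mul_le_mul_right _ this
        _ = (d+1)^(p+1) := by ring

/-! ### Greedy coloring -/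

theorem exists_good_col (C : Str σ) (r D : ℕ)
    (hball : ∀ a : C.Dom, ({b | near C r a b}).Finite ∧
      ({b | near C r a b}).ncard ≤ D) :
    ∃ col : C.Dom → Fin (D+1),
      ∀ x y : C.Dom, near C r x y → col x = col y → x = y := by
  classical
  have wf : WellFounded (WellOrderingRel : C.Dom → C.Dom → Prop) :=
    (WellOrderingRel.isWellOrder).toIsWellFounded.wf
  have key : ∀ (a : C.Dom) (g : ∀ b, WellOrderingRel b a → Fin (D+1)),
      ∃ cc : Fin (D+1), ∀ b (h : WellOrderingRel b a), near C r a b → g b h ≠ cc := by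
    intro a g
    set g0 : C.Dom → Fin (D+1) :=
      fun b => if h : WellOrderingRel b a then g b h else 0 with hg0
    set S : Set (Fin (D+1)) := g0 '' {b | near C r a b} with hS
    have hSfin : S.Finite := (hball a).1.image _
    have hScard : S.ncard ≤ D := le_trans (Set.ncard_image_le (hball a).1) (hball a).2
    have : ∃ cc, cc ∉ S := by
      by_contra h
      push_neg at h
      have : (Set.univ : Set (Fin (D+1))) ⊆ S := fun x _ => h x
      have := Set.ncard_le_ncard this hSfin
      rw [Set.ncard_univ] at this
      simp [Nat.card_eq_fintype_card] at this
      omega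
    obtain ⟨cc, hcc⟩ := this
    refine ⟨cc, ?_⟩
    intro b h hnear heq
    exact hcc ⟨b, hnear, by simp [hg0, dif_pos h, heq]⟩
  set F : ∀ (a : C.Dom), (∀ b, WellOrderingRel b a → Fin (D+1)) → Fin (D+1) :=
    fun a g => (key a g).choose with hF
  set col : C.Dom → Fin (D+1) := wf.fix F with hcol
  have hfix : ∀ a, col a = F a (fun b _ => col b) := fun a => wf.fix_eq F a
  have hHP : ∀ a b, WellOrderingRel b a → near C r a b → col b ≠ col a := by
    intro a b hW hnear
    have := (key a (fun b _ => col b)).choose_spec b hW hnear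
    rw [hfix a]
    exact this
  refine ⟨col, ?_⟩
  intro x y hnear hcoleq
  rcases trichotomous_of (WellOrderingRel) x y with h | h | h
  · exact absurd hcoleq (hHP y x h (near_symm hnear))
  · exact h
  · exact absurd hcoleq.symm (hHP x y h hnear)




variable {σ : Sig} {K : Type}

/-! ### Basic facts about `equivPtp` -/

theorem equivPtp_mono {A : Str σ} {s n : ℕ} (h : s ≤ n) {a b : A.Dom}
    (he : equivPtp A n a b) : equivPtp A s a b :=
  fun k hk q => he k (lt_of_lt_of_le hk h) q

theorem equivPtp_symm {A : Str σ} {n : ℕ} {a b : A.Dom}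
    (he : equivPtp A n a b) : equivPtp A n b a :=
  fun k hk q => (he k hk q).symm

theorem equivPtp_trans {A : Str σ} {n : ℕ} {a b c : A.Dom}
    (h1 : equivPtp A n a b) (h2 : equivPtp A n b c) : equivPtp A n a c :=
  fun k hk q => (h1 k hk q).trans (h2 k hk q)

/-- Transfer of a single unary atom along 1-equivalence. -/
theorem un_transfer {A : Str σ} {a b : A.Dom} (h : equivPtp A 1 a b) {u : σ.Un}
    (hu : A.un u b) : A.un u a := by
  have h2 : ∃ v, sat A v b ([Atom.un u Tm.y] : CQ σ 0) := by
    refine ⟨Fin.elim0, ?_⟩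
    intro x hx
    simp only [List.mem_singleton] at hx
    subst hx
    exact hu
  obtain ⟨v, hv⟩ := (h 0 Nat.one_pos _).2 h2
  exact hv _ (List.mem_singleton_self _)

/-- An element 1-equivalent to a constant is that constant. -/
theorem const_transfer {A : Str σ} {a b : A.Dom} (h : equivPtp A 1 a b) {c : σ.Const}
    (hb : b = A.const c) : a = A.const c := by
  have h2 : ∃ v, sat A v b ([Atom.eq Tm.y (Tm.const c)] : CQ σ 0) := by
    refine ⟨Fin.elim0, ?_⟩
    intro x hx
    simp only [List.mem_singleton] at hx
    subst hx
    exact hb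
  obtain ⟨v, hv⟩ := (h 0 Nat.one_pos _).2 h2
  exact hv _ (List.mem_singleton_self _)

/-- 1-equivalent elements of a colored structure have the same color. -/
theorem col_transfer {C : Str σ} {col : C.Dom → K} {a b : C.Dom}
    (h : equivPtp (colored C col) 1 a b) : col a = col b := by
  have : (colored C col).un (Sum.inr (col b)) b := rfl
  exact un_transfer h this

/-! ### Term lifting for the back-and-forth lemma -/

def liftTm {k : ℕ} : Tm σ k → Tm σ (k+1)
  | .var i => .var i.castSucc
  | .y => .var (Fin.last k)
  | .const c => .const c

def liftAtom {k : ℕ} : Atom σ k → Atom σ (k+1)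
  | .rel R s t => .rel R (liftTm s) (liftTm t)
  | .un u s => .un u (liftTm s)
  | .eq s t => .eq (liftTm s) (liftTm t)

theorem tmVal_liftTm (A : Str σ) {k : ℕ} (v : Fin k → A.Dom) (b e : A.Dom)
    (t : Tm σ k) : tmVal A (Fin.snoc v b) e (liftTm t) = tmVal A v b t := by
  cases t <;> simp [liftTm, tmVal, Fin.snoc_castSucc, Fin.snoc_last]

theorem satAtom_liftAtom (A : Str σ) {k : ℕ} (v : Fin k → A.Dom) (b e : A.Dom)
    (a : Atom σ k) : satAtom A (Fin.snoc v b) e (liftAtom a) ↔ satAtom A v b a := by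
  cases a <;> simp [liftAtom, satAtom, tmVal_liftTm]

theorem sat_liftAtom (A : Str σ) {k : ℕ} (v : Fin k → A.Dom) (b e : A.Dom)
    (q : CQ σ k) : sat A (Fin.snoc v b) e (q.map liftAtom) ↔ sat A v b q := by
  constructor
  · intro h a ha
    exact (satAtom_liftAtom A v b e a).1 (h _ (List.mem_map_of_mem ha))
  · intro h a ha
    obtain ⟨a0, ha0, rfl⟩ := List.mem_map.1 ha
    exact (satAtom_liftAtom A v b e a0).2 (h _ ha0)

/-! ### Uniqueness of neighbors by color -/

theorem nbr_uniq {C : Str σ} {col : C.Dom → K} {r : ℕ} (hr : 2 ≤ r)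
    (hGood : ∀ x y : C.Dom, near C r x y → col x = col y → x = y)
    {R R' : σ.Rel} {x y y' : C.Dom} (h1 : C.rel R x y) (h2 : C.rel R' x y')
    (hc : col y = col y') : y = y' := by
  have hn : near C 2 y y' :=
    near_trans (near_single (Or.inr ⟨R, h1⟩)) (near_single (Or.inl ⟨R', h2⟩))
  exact hGood y y' (near_mono hr hn) hc

theorem nbr_uniq' {C : Str σ} {col : C.Dom → K} {r : ℕ} (hr : 2 ≤ r)
    (hGood : ∀ x y : C.Dom, near C r x y → col x = col y → x = y)
    {R R' : σ.Rel} {x y y' : C.Dom} (h1 : C.rel R y x) (h2 : C.rel R' y' x)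
    (hc : col y = col y') : y = y' := by
  have hn : near C 2 y y' :=
    near_trans (near_single (Or.inl ⟨R, h1⟩)) (near_single (Or.inr ⟨R', h2⟩))
  exact hGood y y' (near_mono hr hn) hc

/-! ### The back-and-forth lemmas -/

theorem back_fwd {C : Str σ} {col : C.Dom → K} {r : ℕ} (hr : 2 ≤ r)
    (hGood : ∀ x y : C.Dom, near C r x y → col x = col y → x = y)
    {s : ℕ} {R : σ.Rel} {a a' b' : C.Dom}
    (hE : equivPtp (colored C col) (s+2) a a')
    (hrel : C.rel R a' b') :
    ∃ b, C.rel R a b ∧ equivPtp (colored C col) (s+1) b b' := by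
  set A := colored C col with hA
  -- existence of a κ-colored R-neighbor of a
  have hq0 : ∃ v, sat A v a'
      ([Atom.rel R Tm.y (Tm.var 0), Atom.un (Sum.inr (col b')) (Tm.var 0)] :
        CQ (colorSig σ K) 1) := by
    refine ⟨fun _ => b', ?_⟩
    intro x hx
    rcases List.mem_cons.1 hx with rfl | hx
    · exact hrel
    · rcases List.mem_singleton.1 hx with rfl
      rfl
  obtain ⟨v, hv⟩ := (hE 1 (by omega) _).2 hq0
  have hab : C.rel R a (v 0) := hv _ (List.mem_cons_self)
  have hcolb : col (v 0) = col b' :=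
    hv _ (List.mem_cons_of_mem _ (List.mem_singleton_self _))
  refine ⟨v 0, hab, ?_⟩
  intro k hk qq
  set qq' : CQ (colorSig σ K) (k+1) :=
    Atom.rel R Tm.y (Tm.var (Fin.last k)) ::
    Atom.un (Sum.inr (col b')) (Tm.var (Fin.last k)) :: qq.map liftAtom with hqq'
  have fwd : ∀ x y : C.Dom, C.rel R x y → col y = col b' →
      (∃ w, sat A w y qq) → ∃ w, sat A w x qq' := by
    rintro x y hxy hcoly ⟨w, hw⟩
    refine ⟨Fin.snoc w y, ?_⟩
    intro at0 hat0
    rcases List.mem_cons.1 hat0 with rfl | hat0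
    · simp only [satAtom, tmVal, Fin.snoc_last]
      simp [Fin.snoc]
      exact hxy
    rcases List.mem_cons.1 hat0 with rfl | hat0
    · simp only [satAtom, tmVal, Fin.snoc_last]
      simp [Fin.snoc]
      exact hcoly
    · obtain ⟨a0, ha0, rfl⟩ := List.mem_map.1 hat0
      exact (satAtom_liftAtom A w y x a0).2 (hw _ ha0)
  have bwd : ∀ x y : C.Dom, C.rel R x y → col y = col b' →
      (∃ w, sat A w x qq') → ∃ w, sat A w y qq := by
    rintro x y hxy hcoly ⟨w, hw⟩
    have h1 : C.rel R x (w (Fin.last k)) := hw _ (List.mem_cons_self)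
    have h2 : col (w (Fin.last k)) = col b' :=
      hw _ (List.mem_cons_of_mem _ (List.mem_cons_self))
    have hye : w (Fin.last k) = y :=
      nbr_uniq hr hGood h1 hxy (h2.trans hcoly.symm)
    refine ⟨Fin.init w, ?_⟩
    intro a0 ha0
    have hm : liftAtom a0 ∈ qq' :=
      List.mem_cons_of_mem _ (List.mem_cons_of_mem _ (List.mem_map_of_mem ha0))
    have := hw _ hm
    rw [← Fin.snoc_init_self w] at this
    have := (satAtom_liftAtom A (Fin.init w) (w (Fin.last k)) x a0).1 this
    rwa [hye] at this
  constructor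
  · intro h
    exact bwd a' b' hrel rfl ((hE (k+1) (by omega) qq').1 (fwd a (v 0) hab hcolb h))
  · intro h
    exact bwd a (v 0) hab hcolb ((hE (k+1) (by omega) qq').2 (fwd a' b' hrel rfl h))

theorem back_bwd {C : Str σ} {col : C.Dom → K} {r : ℕ} (hr : 2 ≤ r)
    (hGood : ∀ x y : C.Dom, near C r x y → col x = col y → x = y)
    {s : ℕ} {R : σ.Rel} {a a' b' : C.Dom}
    (hE : equivPtp (colored C col) (s+2) a a')
    (hrel : C.rel R b' a') :
    ∃ b, C.rel R b a ∧ equivPtp (colored C col) (s+1) b b' := by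
  set A := colored C col with hA
  have hq0 : ∃ v, sat A v a'
      ([Atom.rel R (Tm.var 0) Tm.y, Atom.un (Sum.inr (col b')) (Tm.var 0)] :
        CQ (colorSig σ K) 1) := by
    refine ⟨fun _ => b', ?_⟩
    intro x hx
    rcases List.mem_cons.1 hx with rfl | hx
    · exact hrel
    · rcases List.mem_singleton.1 hx with rfl
      rfl
  obtain ⟨v, hv⟩ := (hE 1 (by omega) _).2 hq0
  have hab : C.rel R (v 0) a := hv _ (List.mem_cons_self)
  have hcolb : col (v 0) = col b' :=
    hv _ (List.mem_cons_of_mem _ (List.mem_singleton_self _))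
  refine ⟨v 0, hab, ?_⟩
  intro k hk qq
  set qq' : CQ (colorSig σ K) (k+1) :=
    Atom.rel R (Tm.var (Fin.last k)) Tm.y ::
    Atom.un (Sum.inr (col b')) (Tm.var (Fin.last k)) :: qq.map liftAtom with hqq'
  have fwd : ∀ x y : C.Dom, C.rel R y x → col y = col b' →
      (∃ w, sat A w y qq) → ∃ w, sat A w x qq' := by
    rintro x y hxy hcoly ⟨w, hw⟩
    refine ⟨Fin.snoc w y, ?_⟩
    intro at0 hat0
    rcases List.mem_cons.1 hat0 with rfl | hat0
    · simp only [satAtom, tmVal, Fin.snoc_last]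
      simp [Fin.snoc]
      exact hxy
    rcases List.mem_cons.1 hat0 with rfl | hat0
    · simp only [satAtom, tmVal, Fin.snoc_last]
      simp [Fin.snoc]
      exact hcoly
    · obtain ⟨a0, ha0, rfl⟩ := List.mem_map.1 hat0
      exact (satAtom_liftAtom A w y x a0).2 (hw _ ha0)
  have bwd : ∀ x y : C.Dom, C.rel R y x → col y = col b' →
      (∃ w, sat A w x qq') → ∃ w, sat A w y qq := by
    rintro x y hxy hcoly ⟨w, hw⟩
    have h1 : C.rel R (w (Fin.last k)) x := hw _ (List.mem_cons_self)
    have h2 : col (w (Fin.last k)) = col b' :=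
      hw _ (List.mem_cons_of_mem _ (List.mem_cons_self))
    have hye : w (Fin.last k) = y :=
      nbr_uniq' hr hGood h1 hxy (h2.trans hcoly.symm)
    refine ⟨Fin.init w, ?_⟩
    intro a0 ha0
    have hm : liftAtom a0 ∈ qq' :=
      List.mem_cons_of_mem _ (List.mem_cons_of_mem _ (List.mem_map_of_mem ha0))
    have := hw _ hm
    rw [← Fin.snoc_init_self w] at this
    have := (satAtom_liftAtom A (Fin.init w) (w (Fin.last k)) x a0).1 this
    rwa [hye] at this
  constructor
  · intro h
    exact bwd a' b' hrel rfl ((hE (k+1) (by omega) qq').1 (fwd a (v 0) hab hcolb h))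
  · intro h
    exact bwd a (v 0) hab hcolb ((hE (k+1) (by omega) qq').2 (fwd a' b' hrel rfl h))




variable {σ : Sig} {K : Type}

/-! ### Approximation of quotient classes -/

/-- `x` is an `s`-approximation of (every representative of) the class `X`. -/
def Apx (C : Str σ) (col : C.Dom → K) (n s : ℕ) (x : C.Dom)
    (X : (Mq (colored C col) n).Dom) : Prop :=
  ∀ a : C.Dom, Quotient.mk (ptpSetoid (colored C col) n) a = X →
    equivPtp (colored C col) s x a

theorem Apx_mono {C : Str σ} {col : C.Dom → K} {n s s' : ℕ} (h : s ≤ s')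
    {x : C.Dom} {X : (Mq (colored C col) n).Dom} (ha : Apx C col n s' x X) :
    Apx C col n s x X :=
  fun a haX => equivPtp_mono h (ha a haX)

theorem Apx_of_mk {C : Str σ} {col : C.Dom → K} {n s : ℕ} (hs : s ≤ n)
    {x : C.Dom} {X : (Mq (colored C col) n).Dom}
    (hx : Quotient.mk (ptpSetoid (colored C col) n) x = X) :
    Apx C col n s x X := by
  intro a ha
  have heq : Quotient.mk (ptpSetoid (colored C col) n) x
      = Quotient.mk (ptpSetoid (colored C col) n) a := hx.trans ha.symm
  have he : equivPtp (colored C col) n x a := Quotient.exact heq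
  exact equivPtp_mono hs he

theorem Apx_of_equiv {C : Str σ} {col : C.Dom → K} {n s : ℕ} (hs : s ≤ n)
    {x b' : C.Dom} {X : (Mq (colored C col) n).Dom}
    (he : equivPtp (colored C col) s x b')
    (hb' : Quotient.mk (ptpSetoid (colored C col) n) b' = X) :
    Apx C col n s x X :=
  fun a ha => equivPtp_trans he (Apx_of_mk hs hb' a ha)

/-! ### One-step lifting of quotient relations -/

theorem step_fwd {C : Str σ} {col : C.Dom → K} {r : ℕ} (hr : 2 ≤ r)
    (hGood : ∀ x y : C.Dom, near C r x y → col x = col y → x = y)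
    {n s : ℕ} (hs : s + 3 ≤ n) {R : σ.Rel} {X Y : (Mq (colored C col) n).Dom}
    (hXY : (Mq (colored C col) n).rel R X Y) {x : C.Dom}
    (hx : Apx C col n (s+3) x X) :
    ∃ y, C.rel R x y ∧ Apx C col n (s+2) y Y := by
  obtain ⟨a', b', ha', hb', hrel⟩ := hXY
  obtain ⟨b, hb, hE⟩ := back_fwd (s := s+1) hr hGood (hx a' ha') hrel
  exact ⟨b, hb, Apx_of_equiv (by omega) hE hb'⟩

theorem step_bwd {C : Str σ} {col : C.Dom → K} {r : ℕ} (hr : 2 ≤ r)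
    (hGood : ∀ x y : C.Dom, near C r x y → col x = col y → x = y)
    {n s : ℕ} (hs : s + 3 ≤ n) {R : σ.Rel} {X Y : (Mq (colored C col) n).Dom}
    (hXY : (Mq (colored C col) n).rel R Y X) {x : C.Dom}
    (hx : Apx C col n (s+3) x X) :
    ∃ y, C.rel R y x ∧ Apx C col n (s+2) y Y := by
  obtain ⟨b', a', hb', ha', hrel⟩ := hXY
  obtain ⟨b, hb, hE⟩ := back_bwd (s := s+1) hr hGood (hx a' ha') hrel
  exact ⟨b, hb, Apx_of_equiv (by omega) hE hb'⟩

/-! ### Finiteness of terms -/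

def tmEnc {k : ℕ} : Tm σ k → (Fin k ⊕ (Unit ⊕ σ.Const))
  | .var i => Sum.inl i
  | .y => Sum.inr (Sum.inl ())
  | .const c => Sum.inr (Sum.inr c)

theorem tmEnc_inj {k : ℕ} : Function.Injective (tmEnc (σ := σ) (k := k)) := by
  intro a b h
  cases a <;> cases b <;> simp [tmEnc] at h <;> simp [h]

instance tmFinite {k : ℕ} [Finite σ.Const] : Finite (Tm σ k) :=
  Finite.of_injective tmEnc tmEnc_inj

/-! ### Chains in an abstract relation -/

def RChain {α : Type} (G : α → α → Prop) : ℕ → α → α → Prop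
  | 0, a, b => a = b
  | ℓ + 1, a, b => ∃ c, G a c ∧ RChain G ℓ c b

theorem rchain_of_walk {α : Type} {G : α → α → Prop} (SG : SimpleGraph α)
    (hSG : ∀ a b, SG.Adj a b → G a b) {a b : α} (w : SG.Walk a b) :
    RChain G w.length a b := by
  induction w with
  | nil => rfl
  | cons h p ih => exact ⟨_, hSG _ _ h, ih⟩

/-- From reflexive-transitive closure of a symmetric relation on a finite type,
get a chain of length at most the cardinality. -/
theorem rchain_short {α : Type} [Finite α] {G : α → α → Prop}
    (hsymm : ∀ a b, G a b → G b a) {a b : α}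
    (h : Relation.ReflTransGen G a b) {L : ℕ} (hL : Nat.card α ≤ L) :
    ∃ ℓ, ℓ ≤ L ∧ RChain G ℓ a b := by
  classical
  haveI : Fintype α := Fintype.ofFinite α
  set SG : SimpleGraph α :=
    { Adj := fun x y => x ≠ y ∧ G x y
      symm := ⟨fun x y hxy => ⟨Ne.symm hxy.1, hsymm _ _ hxy.2⟩⟩
      loopless := ⟨fun x hx => hx.1 rfl⟩ } with hSG
  have hre : SG.Reachable a b ∨ a = b := by
    induction h with
    | refl => exact Or.inr rfl
    | tail hab hbc ih =>
      rename_i x c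
      by_cases hxc : x = c
      · exact hxc ▸ ih
      · have hadj : SG.Adj x c := ⟨hxc, hbc⟩
        rcases ih with ih | rfl
        · exact Or.inl (ih.trans hadj.reachable)
        · exact Or.inl hadj.reachable
  rcases hre with hre | rfl
  · obtain ⟨p⟩ := hre
    have hpath := p.bypass_isPath
    have hlen : p.bypass.length < Fintype.card α := hpath.length_lt
    refine ⟨p.bypass.length, ?_, rchain_of_walk SG (fun a b h => h.2) p.bypass⟩
    rw [Nat.card_eq_fintype_card] at hL
    omega
  · exact ⟨0, by omega, rfl⟩

/-! ### The forward direction: the quotient map preserves positive types -/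

theorem sat_qmap (C : Str σ) (col : C.Dom → K) (n : ℕ) {k : ℕ}
    (v : Fin k → C.Dom) (e : C.Dom) (q : CQ σ k) (h : sat C v e q) :
    sat (reduct (Mq (colored C col) n))
      (fun i => qmap (colored C col) n (v i)) (qmap (colored C col) n e) q := by
  have hval : ∀ t : Tm σ k,
      tmVal (reduct (Mq (colored C col) n))
        (fun i => qmap (colored C col) n (v i)) (qmap (colored C col) n e) t
      = qmap (colored C col) n (tmVal C v e t) := by
    intro t; cases t <;> rfl
  intro a ha
  have hsa := h a ha
  cases a with
  | rel R t t' =>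
    show (Mq (colored C col) n).rel R _ _
    rw [hval t, hval t']
    exact ⟨_, _, rfl, rfl, hsa⟩
  | un U t =>
    show (Mq (colored C col) n).un (Sum.inl U) _
    rw [hval t]
    exact ⟨_, rfl, hsa⟩
  | eq t t' =>
    show tmVal _ _ _ t = tmVal _ _ _ t'
    rw [hval t, hval t']
    exact congrArg _ hsa




variable {σ : Sig} {K : Type}

theorem main_lift [Finite σ.Const] (C : Str σ) (col : C.Dom → K) (L : ℕ)
    (hGood : ∀ x y : C.Dom, near C (2*L+2) x y → col x = col y → x = y)
    {k : ℕ} (hcard : k + 1 + Nat.card σ.Const ≤ L)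
    (e : C.Dom) (q : CQ σ k) (V : Fin k → (Mq (colored C col) (L+3)).Dom)
    (hsat : sat (reduct (Mq (colored C col) (L+3))) V
      (qmap (colored C col) (L+3) e) q) :
    ∃ w, sat C w e q := by
  classical
  haveI : Nonempty C.Dom := ⟨e⟩
  have hr2 : 2 ≤ 2*L+2 := by omega
  -- values of terms in the quotient
  set VT : Tm σ k → (Mq (colored C col) (L+3)).Dom :=
    tmVal (reduct (Mq (colored C col) (L+3))) V (qmap (colored C col) (L+3) e) with hVT
  -- facts from quotient satisfaction
  have hqrel : ∀ (R : σ.Rel) (t t' : Tm σ k), Atom.rel R t t' ∈ q →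
      (Mq (colored C col) (L+3)).rel R (VT t) (VT t') := by
    intro R t t' h
    rw [hVT]
    exact hsat _ h
  have hqun : ∀ (U : σ.Un) (t : Tm σ k), Atom.un U t ∈ q →
      (Mq (colored C col) (L+3)).un (Sum.inl U) (VT t) := by
    intro U t h
    rw [hVT]
    exact hsat _ h
  have hqeq : ∀ (t t' : Tm σ k), Atom.eq t t' ∈ q → VT t = VT t' := by
    intro t t' h
    rw [hVT]
    exact hsat _ h
  -- the constraint graph on terms
  set G' : Tm σ k → Tm σ k → Prop := fun t t' =>
    (∃ R, Atom.rel R t t' ∈ q ∨ Atom.rel R t' t ∈ q) ∨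
    (Atom.eq t t' ∈ q ∨ Atom.eq t' t ∈ q) with hG'
  have hG'symm : ∀ t t', G' t t' → G' t' t := by
    intro t t' h
    rcases h with ⟨R, h | h⟩ | (h | h)
    · exact Or.inl ⟨R, Or.inr h⟩
    · exact Or.inl ⟨R, Or.inl h⟩
    · exact Or.inr (Or.inr h)
    · exact Or.inr (Or.inl h)
  haveI : Finite (Tm σ k) := tmFinite
  have hcardT : Nat.card (Tm σ k) ≤ L := by
    have h1 : Nat.card (Tm σ k) ≤ Nat.card (Fin k ⊕ (Unit ⊕ σ.Const)) :=
      Nat.card_le_card_of_injective tmEnc tmEnc_inj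
    haveI : Fintype σ.Const := Fintype.ofFinite _
    have h2 : Nat.card (Fin k ⊕ (Unit ⊕ σ.Const)) = k + (1 + Nat.card σ.Const) := by
      simp [Nat.card_eq_fintype_card, Fintype.card_sum]
    omega
  -- the equivalence of connected components
  set S : Setoid (Tm σ k) :=
    ⟨Relation.ReflTransGen G',
      ⟨fun _ => Relation.ReflTransGen.refl,
       fun h => by
         haveI : Std.Symm G' := ⟨fun _ _ hg => hG'symm _ _ hg⟩
         exact Std.Symm.symm _ _ h,
       Relation.ReflTransGen.trans⟩⟩ with hS
  -- anchors: one per connected component; `e` for the component of `y`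
  set anch : Tm σ k → C.Dom := fun t =>
    if Relation.ReflTransGen G' Tm.y t then e
    else Quotient.out (VT (Quotient.out (Quotient.mk S t))) with hanch
  have hconst : ∀ t t', G' t t' → anch t = anch t' := by
    intro t t' hg
    by_cases h : Relation.ReflTransGen G' Tm.y t
    · rw [hanch]
      simp only [if_pos h, if_pos (h.tail hg)]
    · have h' : ¬ Relation.ReflTransGen G' Tm.y t' := by
        intro h2
        exact h (h2.tail (hG'symm _ _ hg))
      rw [hanch]
      simp only [if_neg h, if_neg h']
      have hmk : (Quotient.mk S t) = Quotient.mk S t' :=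
        Quotient.sound (show Setoid.r t t' from Relation.ReflTransGen.single hg)
      rw [hmk]
  have hanchspec : ∀ t : Tm σ k, ∃ t0, Relation.ReflTransGen G' t0 t ∧
      Quotient.mk (ptpSetoid (colored C col) (L+3)) (anch t) = VT t0 := by
    intro t
    by_cases h : Relation.ReflTransGen G' Tm.y t
    · refine ⟨Tm.y, h, ?_⟩
      rw [hanch]
      simp only [if_pos h]
      rw [hVT]
      rfl
    · refine ⟨Quotient.out (Quotient.mk S t), ?_, ?_⟩
      · exact Quotient.exact (Quotient.out_eq (Quotient.mk S t))
      · rw [hanch]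
        simp only [if_neg h]
        exact Quotient.out_eq _
  -- lifting along chains
  have hwalk : ∀ ℓ, ℓ ≤ L → ∀ t0 t : Tm σ k, RChain G' ℓ t0 t →
      ∀ x0 : C.Dom, Apx C col (L+3) (ℓ+3) x0 (VT t0) →
      ∃ x, near C ℓ x0 x ∧ Apx C col (L+3) 3 x (VT t) := by
    intro ℓ
    induction ℓ with
    | zero =>
      intro _ t0 t hch x0 hx0
      exact ⟨x0, near_refl C 0 x0, hch ▸ hx0⟩
    | succ ℓ ih =>
      rintro hℓ t0 t ⟨c, hGc, hch⟩ x0 hx0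
      have hstep : ∃ x1, near C 1 x0 x1 ∧ Apx C col (L+3) (ℓ+3) x1 (VT c) := by
        rcases hGc with ⟨R, h | h⟩ | (h | h)
        · obtain ⟨y, hy, hapx⟩ := step_fwd (s := ℓ+1) hr2 hGood (by omega)
            (hqrel R t0 c h) (by exact hx0)
          exact ⟨y, near_single (Or.inl ⟨R, hy⟩), hapx⟩
        · obtain ⟨y, hy, hapx⟩ := step_bwd (s := ℓ+1) hr2 hGood (by omega)
            (hqrel R c t0 h) (by exact hx0)
          exact ⟨y, near_single (Or.inr ⟨R, hy⟩), hapx⟩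
        · have he := hqeq t0 c h
          exact ⟨x0, near_refl C 1 x0, he ▸ Apx_mono (by omega) hx0⟩
        · have he := (hqeq c t0 h).symm
          exact ⟨x0, near_refl C 1 x0, he ▸ Apx_mono (by omega) hx0⟩
      obtain ⟨x1, h1, hA1⟩ := hstep
      obtain ⟨x, hx, hAx⟩ := ih (by omega) c t hch x1 hA1
      refine ⟨x, ?_, hAx⟩
      have := near_trans h1 hx
      rwa [Nat.add_comm] at this
  -- per-term existence of lifts
  have hex : ∀ t : Tm σ k, ∃ x, near C L (anch t) x ∧ Apx C col (L+3) 3 x (VT t) := by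
    intro t
    obtain ⟨t0, hconn, hanch0⟩ := hanchspec t
    obtain ⟨ℓ, hℓ, hch⟩ := rchain_short hG'symm hconn hcardT
    have hx0 : Apx C col (L+3) (ℓ+3) (anch t) (VT t0) := Apx_of_mk (by omega) hanch0
    obtain ⟨x, hx, hA⟩ := hwalk ℓ hℓ t0 t hch _ hx0
    exact ⟨x, near_mono hℓ hx, hA⟩
  -- the canonical lift
  set P : Tm σ k → C.Dom → Prop :=
    fun t x => near C L (anch t) x ∧ Apx C col (L+3) 3 x (VT t) with hP
  set w : Tm σ k → C.Dom := fun t => Classical.epsilon (P t) with hw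
  have hwspec : ∀ t, P t (w t) := fun t => Classical.epsilon_spec (hex t)
  -- uniqueness of lifts
  have huniq : ∀ (t : Tm σ k) (x y : C.Dom), near C L (anch t) x →
      Apx C col (L+3) 1 x (VT t) → near C L (anch t) y → Apx C col (L+3) 1 y (VT t) →
      x = y := by
    intro t x y hx hAx hy hAy
    have hrep : Quotient.mk (ptpSetoid (colored C col) (L+3)) (Quotient.out (VT t))
        = VT t := Quotient.out_eq _
    have h1 : col x = col (Quotient.out (VT t)) := col_transfer (hAx _ hrep)
    have h2 : col y = col (Quotient.out (VT t)) := col_transfer (hAy _ hrep)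
    have hnear : near C (2*L) x y :=
      near_mono (by omega) (near_trans (near_symm hx) hy)
    exact hGood x y (near_mono (by omega) hnear) (h1.trans h2.symm)
  -- the lift of `y` is `e`
  have hanchy : anch Tm.y = e := by
    rw [hanch]; simp only [if_pos Relation.ReflTransGen.refl]
  have hVTy : Quotient.mk (ptpSetoid (colored C col) (L+3)) e = VT Tm.y := by
    rw [hVT]
    rfl
  have hwy : w Tm.y = e := by
    refine huniq Tm.y (w Tm.y) e (hwspec Tm.y).1 (Apx_mono (by omega) (hwspec Tm.y).2)
      ?_ ?_
    · rw [hanchy]; exact near_refl C L e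
    · exact Apx_mono (by omega) (Apx_of_mk le_rfl hVTy)
  -- the lift of a constant is that constant
  have hwc : ∀ c : σ.Const, w (Tm.const c) = C.const c := by
    intro c
    have h1 : Quotient.mk (ptpSetoid (colored C col) (L+3)) (C.const c)
        = VT (Tm.const c) := by
      rw [hVT]
      rfl
    have h2 := (hwspec (Tm.const c)).2 (C.const c) h1
    exact const_transfer (equivPtp_mono (by omega) h2) rfl
  -- term values agree with the lift
  have hval : ∀ t : Tm σ k, tmVal C (fun i => w (Tm.var i)) e t = w t := by
    intro t
    cases t with
    | var i => rfl
    | y => exact hwy.symm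
    | const c => exact (hwc c).symm
  refine ⟨fun i => w (Tm.var i), ?_⟩
  intro a ha
  cases a with
  | rel R t t' =>
    show C.rel R (tmVal C _ e t) (tmVal C _ e t')
    rw [hval t, hval t']
    obtain ⟨a', b', ha', hb', hab⟩ := hqrel R t t' ha
    have hE3 : equivPtp (colored C col) 3 (w t) a' := (hwspec t).2 a' ha'
    obtain ⟨b, hb, hEb⟩ := back_fwd (s := 1) hr2 hGood hE3 hab
    have hGtt' : G' t t' := Or.inl ⟨R, Or.inl ha⟩
    have hanchEq : anch t = anch t' := hconst t t' hGtt'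
    have hcolb : col b = col b' := col_transfer (equivPtp_mono (by omega) hEb)
    have hcolw : col (w t') = col b' :=
      col_transfer (equivPtp_mono (by omega) ((hwspec t').2 b' hb'))
    have hnearb : near C (2*L+2) b (w t') := by
      have hb1 : near C (L+1) (anch t) b :=
        near_trans (hwspec t).1 (near_single (Or.inl ⟨R, hb⟩))
      have hb2 : near C L (anch t) (w t') := hanchEq ▸ (hwspec t').1
      have := near_trans (near_symm hb1) hb2
      exact near_mono (by omega) this
    have hbw : b = w t' := hGood _ _ hnearb (hcolb.trans hcolw.symm)
    exact hbw ▸ hb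
  | un U t =>
    show C.un U (tmVal C _ e t)
    rw [hval t]
    obtain ⟨a', ha', hU⟩ := hqun U t ha
    have : (colored C col).un (Sum.inl U) (w t) :=
      un_transfer (equivPtp_mono (by omega) ((hwspec t).2 a' ha')) hU
    exact this
  | eq t t' =>
    show tmVal C _ e t = tmVal C _ e t'
    rw [hval t, hval t']
    have hGtt' : G' t t' := Or.inr (Or.inl ha)
    have hanchEq : anch t = anch t' := hconst t t' hGtt'
    have hVTeq : VT t = VT t' := hqeq t t' ha
    refine huniq t (w t) (w t') (hwspec t).1 (Apx_mono (by omega) (hwspec t).2)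
      ?_ ?_
    · rw [hanchEq]; exact (hwspec t').1
    · rw [hVTeq]; exact Apx_mono (by omega) (hwspec t').2



end BDDFC
open BDDFC

/-- every binary structure of bounded degree (a uniform bound on
the number of atoms any element participates in) is ptp-conservative. -/
theorem stmt_19 {σ : Sig} [Finite σ.Rel] [Finite σ.Un] [Finite σ.Const]
    (C : Str σ) (d : ℕ)
    (hdeg : ∀ a : C.Dom,
      ({p : σ.Rel × C.Dom × C.Dom |
          C.rel p.1 p.2.1 p.2.2 ∧ (p.2.1 = a ∨ p.2.2 = a)}).Finite ∧
      ({p : σ.Rel × C.Dom × C.Dom |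
          C.rel p.1 p.2.1 p.2.2 ∧ (p.2.1 = a ∨ p.2.2 = a)}).ncard ≤ d)
    (m : ℕ) :
    ∃ (n : ℕ) (K : Type) (_ : Finite K) (col : C.Dom → K),
      conservative C col n m := by
  classical
  obtain ⟨col, hGood⟩ := exists_good_col C (2*(m + Nat.card σ.Const)+2)
    ((d+1)^(2*(m + Nat.card σ.Const)+2))
    (fun a => ball_bound C d hdeg (2*(m + Nat.card σ.Const)+2) a)
  refine ⟨(m + Nat.card σ.Const) + 3, Fin ((d+1)^(2*(m + Nat.card σ.Const)+2) + 1),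
    inferInstance, col, ?_⟩
  intro e k hk q
  constructor
  · rintro ⟨v, hv⟩
    exact ⟨_, sat_qmap C col ((m + Nat.card σ.Const) + 3) v e q hv⟩
  · rintro ⟨V, hV⟩
    exact main_lift C col (m + Nat.card σ.Const) hGood (by omega) e q V hV
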